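/- For every point q = (B,i,j) of the quiver representation space 𝕄 and every ξ ∈ ℂ, the hyperkähler rotation HK_ξ(q) satisfies, at every vertex k: μ_ℝ(HK_ξ(q))_k = (1 − |ξ|²)·μ_ℝ(q)_k − i·conj(ξ)·μ_ℂ(q)_k − i·ξ·(μ_ℂ(q)_k)†. -/

import Mathlib

open Matrix Filter Topology

namespace QuiverCL

noncomputable section

variable {n : ℕ} {E : Type*}

/-- Cast a matrix along equalities of vertices. -/
def castM2 (v : Fin n → ℕ) {a b a' b' : Fin n} (ea : a = a') (eb : b = b')
    (M : Matrix (Fin (v a)) (Fin (v b)) ℂ) : Matrix (Fin (v a')) (Fin (v b')) ℂ :=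
  Matrix.reindex (finCongr (congrArg v ea)) (finCongr (congrArg v eb)) M

/-- The quiver representation space `𝕄`: a triple `(B, i, j)` of families of matrices,
`B h : V (src h) → V (tgt h)`, `i k : W k → V k`, `j k : V k → W k`
(matrices act on column vectors, so `Hom(V_a, V_b)` is `Matrix (Fin (v b)) (Fin (v a)) ℂ`). -/
abbrev Rep (src tgt : E → Fin n) (v w : Fin n → ℕ) : Type _ :=
  (∀ h : E, Matrix (Fin (v (tgt h))) (Fin (v (src h))) ℂ)
  × (∀ k : Fin n, Matrix (Fin (v k)) (Fin (w k)) ℂ)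
  × (∀ k : Fin n, Matrix (Fin (w k)) (Fin (v k)) ℂ)

/-- `ε(h) = 1` for `h ∈ Ω` and `ε(h) = -1` for `h ∈ Ω̄`. -/
def eps (Ω : E → Prop) [DecidablePred Ω] (h : E) : ℂ := if Ω h then 1 else -1

/-- The matrix `B_{h̄}` attached to the reversed edge, recast so that it is a matrix
`V (tgt h) → V (src h)`. -/
def Bbar (src tgt : E → Fin n) (bar : E → E) (v w : Fin n → ℕ)
    (hbs : ∀ h, src (bar h) = tgt h) (hbt : ∀ h, tgt (bar h) = src h)
    (p : Rep src tgt v w) (h : E) : Matrix (Fin (v (src h))) (Fin (v (tgt h))) ℂ :=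
  castM2 v (hbt h) (hbs h) (p.1 (bar h))

/-- The real moment map, componentwise:
`μ_ℝ(B,i,j)_k = (i/2)·[Σ_{in(h)=k} (B_h B_h† − B_{h̄}† B_{h̄}) + i_k i_k† − j_k† j_k]`. -/
def muR [Fintype E] (src tgt : E → Fin n) (bar : E → E) (v w : Fin n → ℕ)
    (hbs : ∀ h, src (bar h) = tgt h) (hbt : ∀ h, tgt (bar h) = src h)
    (p : Rep src tgt v w) (k : Fin n) : Matrix (Fin (v k)) (Fin (v k)) ℂ :=
  (Complex.I / 2) •
    ((∑ h : E, if e : tgt h = k then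
        castM2 v e e
          (p.1 h * (p.1 h)ᴴ -
            (Bbar src tgt bar v w hbs hbt p h)ᴴ * Bbar src tgt bar v w hbs hbt p h)
      else 0)
      + (p.2.1 k * (p.2.1 k)ᴴ - (p.2.2 k)ᴴ * p.2.2 k))

/-- The complex moment map, componentwise:
`μ_ℂ(B,i,j)_k = Σ_{in(h)=k} ε(h)·B_h B_{h̄} + i_k j_k`. -/
def muC [Fintype E] (src tgt : E → Fin n) (bar : E → E) (Ω : E → Prop) [DecidablePred Ω]
    (v w : Fin n → ℕ)
    (hbs : ∀ h, src (bar h) = tgt h) (hbt : ∀ h, tgt (bar h) = src h)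
    (p : Rep src tgt v w) (k : Fin n) : Matrix (Fin (v k)) (Fin (v k)) ℂ :=
  (∑ h : E, if e : tgt h = k then
      eps Ω h • castM2 v e e (p.1 h * Bbar src tgt bar v w hbs hbt p h)
    else 0)
    + p.2.1 k * p.2.2 k

/-- The hyperkähler rotation `HK_ξ(B,i,j) = (B_h − ε(h)·ξ·B_{h̄}†, i_k − ξ·j_k†, j_k + ξ·i_k†)`. -/
def HK (src tgt : E → Fin n) (bar : E → E) (Ω : E → Prop) [DecidablePred Ω]
    (v w : Fin n → ℕ)
    (hbs : ∀ h, src (bar h) = tgt h) (hbt : ∀ h, tgt (bar h) = src h)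
    (ξ : ℂ) (p : Rep src tgt v w) : Rep src tgt v w :=
  ⟨fun h => p.1 h - (eps Ω h * ξ) • (Bbar src tgt bar v w hbs hbt p h)ᴴ,
   fun k => p.2.1 k - ξ • (p.2.2 k)ᴴ,
   fun k => p.2.2 k + ξ • (p.2.1 k)ᴴ⟩

/-- The gauge action `g·(B,i,j) = (g_{in(h)} B_h g_{out(h)}⁻¹, g_k i_k, j_k g_k⁻¹)`. -/
def gauge (src tgt : E → Fin n) (v w : Fin n → ℕ)
    (g : ∀ k : Fin n, Matrix (Fin (v k)) (Fin (v k)) ℂ) (p : Rep src tgt v w) :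
    Rep src tgt v w :=
  ⟨fun h => g (tgt h) * p.1 h * (g (src h))⁻¹,
   fun k => g k * p.2.1 k,
   fun k => p.2.2 k * (g k)⁻¹⟩

/-- The infinitesimal gauge action `l_p(ξ) = (ξ_{in(h)} B_h − B_h ξ_{out(h)}, ξ_k i_k, −j_k ξ_k)`. -/
def lp (src tgt : E → Fin n) (v w : Fin n → ℕ)
    (p : Rep src tgt v w) (ξ : ∀ k : Fin n, Matrix (Fin (v k)) (Fin (v k)) ℂ) :
    Rep src tgt v w :=
  ⟨fun h => ξ (tgt h) * p.1 h - p.1 h * ξ (src h),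
   fun k => ξ k * p.2.1 k,
   fun k => -(p.2.2 k * ξ k)⟩

/-- The adjoint of the infinitesimal gauge action, componentwise:
`l_p^*(q)_k = Σ_{in(h)=k} (A_h B_h† − B_{h̄}† A_{h̄}) + I_k i_k† − j_k† J_k`. -/
def lpStar [Fintype E] (src tgt : E → Fin n) (bar : E → E) (v w : Fin n → ℕ)
    (hbs : ∀ h, src (bar h) = tgt h) (hbt : ∀ h, tgt (bar h) = src h)
    (p q : Rep src tgt v w) (k : Fin n) : Matrix (Fin (v k)) (Fin (v k)) ℂ :=
  (∑ h : E, if e : tgt h = k then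
      castM2 v e e
        (q.1 h * (p.1 h)ᴴ -
          (Bbar src tgt bar v w hbs hbt p h)ᴴ * Bbar src tgt bar v w hbs hbt q h)
    else 0)
    + (q.2.1 k * (p.2.1 k)ᴴ - (p.2.2 k)ᴴ * q.2.2 k)

/-- The hermitian inner product
`⟨q, q′⟩ = Σ_h Tr(A_h A′_h†) + Σ_k Tr(I_k I′_k†) + Σ_k Tr(J_k J′_k†)` on `𝕄`. -/
def innerRep [Fintype E] (src tgt : E → Fin n) (v w : Fin n → ℕ)
    (q q' : Rep src tgt v w) : ℂ :=
  (∑ h : E, (q.1 h * (q'.1 h)ᴴ).trace)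
    + (∑ k : Fin n, (q.2.1 k * (q'.2.1 k)ᴴ).trace)
    + (∑ k : Fin n, (q.2.2 k * (q'.2.2 k)ᴴ).trace)

/-- The complex symplectic form
`ω_ℂ(q, q′) = Σ_h ε(h)·Tr(A_h A′_{h̄}) + Σ_k Tr(I_k J′_k − I′_k J_k)`. -/
def omegaC [Fintype E] (src tgt : E → Fin n) (bar : E → E) (Ω : E → Prop) [DecidablePred Ω]
    (v w : Fin n → ℕ)
    (hbs : ∀ h, src (bar h) = tgt h) (hbt : ∀ h, tgt (bar h) = src h)
    (q q' : Rep src tgt v w) : ℂ :=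
  (∑ h : E, eps Ω h * (q.1 h * Bbar src tgt bar v w hbs hbt q' h).trace)
    + ∑ k : Fin n, ((q.2.1 k * q'.2.2 k).trace - (q'.2.1 k * q.2.2 k).trace)

/-- The scaling action `t∘(B,i,j)`: multiply the `Ω̄`-components and the `j`-components by `t`. -/
def scale (src tgt : E → Fin n) (Ω : E → Prop) [DecidablePred Ω] (v w : Fin n → ℕ)
    (t : ℂ) (p : Rep src tgt v w) : Rep src tgt v w :=
  ⟨fun h => if Ω h then p.1 h else t • p.1 h,
   fun k => p.2.1 k,
   fun k => t • p.2.2 k⟩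

/-- The second complex structure `J(m, m′) = (−(m′)†, m†)` on `𝕄 = 𝕄_Ω ⊕ 𝕄_Ω̄`. -/
def Jmap (src tgt : E → Fin n) (bar : E → E) (Ω : E → Prop) [DecidablePred Ω]
    (v w : Fin n → ℕ)
    (hbs : ∀ h, src (bar h) = tgt h) (hbt : ∀ h, tgt (bar h) = src h)
    (q : Rep src tgt v w) : Rep src tgt v w :=
  ⟨fun h => (-(eps Ω h)) • (Bbar src tgt bar v w hbs hbt q h)ᴴ,
   fun k => -((q.2.2 k)ᴴ),
   fun k => (q.2.1 k)ᴴ⟩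

/-- The point `p_A(ℏ)` of `𝕄`: for `h ∈ Ω` the `h`-component is `B⁰_h + A_h − ℏ·(B⁰_{h̄})†` and
for `h ∈ Ω̄` it is `ℏ⁻¹·(B⁰_h + A_h) + (B⁰_{h̄})†`; the `i`-components are
`i⁰_k + I_k − ℏ·(j⁰_k)†` and the `j`-components are `ℏ⁻¹·(j⁰_k + J_k) + (i⁰_k)†`. -/
def pA (src tgt : E → Fin n) (bar : E → E) (Ω : E → Prop) [DecidablePred Ω]
    (v w : Fin n → ℕ)
    (hbs : ∀ h, src (bar h) = tgt h) (hbt : ∀ h, tgt (bar h) = src h)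
    (p0 A : Rep src tgt v w) (ℏ : ℂ) : Rep src tgt v w :=
  ⟨fun h => if Ω h
      then p0.1 h + A.1 h - ℏ • (Bbar src tgt bar v w hbs hbt p0 h)ᴴ
      else ℏ⁻¹ • (p0.1 h + A.1 h) + (Bbar src tgt bar v w hbs hbt p0 h)ᴴ,
   fun k => p0.2.1 k + A.2.1 k - ℏ • (p0.2.2 k)ᴴ,
   fun k => ℏ⁻¹ • (p0.2.2 k + A.2.2 k) + (p0.2.1 k)ᴴ⟩

/-- The linearization of the real moment map equation:
`ℒ(p,ξ)_k = Σ_{in(h)=k} [B_h(B_h† ξ_{in(h)} − ξ_{out(h)} B_h†) −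
(B_{h̄}† ξ_{out(h)} − ξ_{in(h)} B_{h̄}†) B_{h̄}] + i_k i_k† ξ_k + ξ_k j_k† j_k`. -/
def linL [Fintype E] (src tgt : E → Fin n) (bar : E → E) (v w : Fin n → ℕ)
    (hbs : ∀ h, src (bar h) = tgt h) (hbt : ∀ h, tgt (bar h) = src h)
    (p : Rep src tgt v w) (ξ : ∀ k : Fin n, Matrix (Fin (v k)) (Fin (v k)) ℂ)
    (k : Fin n) : Matrix (Fin (v k)) (Fin (v k)) ℂ :=
  (∑ h : E, if e : tgt h = k then
      castM2 v e e
        (p.1 h * ((p.1 h)ᴴ * ξ (tgt h) - ξ (src h) * (p.1 h)ᴴ)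
          - ((Bbar src tgt bar v w hbs hbt p h)ᴴ * ξ (src h)
              - ξ (tgt h) * (Bbar src tgt bar v w hbs hbt p h)ᴴ)
            * Bbar src tgt bar v w hbs hbt p h)
    else 0)
    + (p.2.1 k * (p.2.1 k)ᴴ * ξ k + ξ k * (p.2.2 k)ᴴ * p.2.2 k)

/-- The product of the matrices of `p` along a list of edges `[h_1, …, h_m]`, as a matrix
`V_a → V_b`; when the list is a path with `a = out(h_1)` and `b = in(h_m)` this is the genuine
composite `B_{h_m} ⋯ B_{h_1}`. -/
def prodAlong (src tgt : E → Fin n) (v w : Fin n → ℕ) (p : Rep src tgt v w) :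
    List E → (a : Fin n) → (b : Fin n) → Matrix (Fin (v b)) (Fin (v a)) ℂ
  | [], a, b => if e : a = b then castM2 v e rfl (1 : Matrix (Fin (v a)) (Fin (v a)) ℂ) else 0
  | (h : E) :: rest, a, b =>
      prodAlong src tgt v w p rest (tgt h) b *
        (if e : src h = a then castM2 v rfl e (p.1 h) else 0)

/-! ### Auxiliary lemmas for STATEMENT 0 -/

theorem castM2_rfl (v : Fin n → ℕ) {a b : Fin n} (M : Matrix (Fin (v a)) (Fin (v b)) ℂ) :
    castM2 v rfl rfl M = M := by simp [castM2]

theorem castM2_irrel (v : Fin n → ℕ) {a b : Fin n} (ea : a = a) (eb : b = b)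
    (M : Matrix (Fin (v a)) (Fin (v b)) ℂ) : castM2 v ea eb M = M := castM2_rfl v M

theorem castM2_sub (v : Fin n → ℕ) {a b a' b' : Fin n} (ea : a = a') (eb : b = b')
    (M N : Matrix (Fin (v a)) (Fin (v b)) ℂ) :
    castM2 v ea eb (M - N) = castM2 v ea eb M - castM2 v ea eb N := by
  subst ea; subst eb; simp [castM2_irrel]

theorem castM2_smul (v : Fin n → ℕ) {a b a' b' : Fin n} (ea : a = a') (eb : b = b')
    (c : ℂ) (M : Matrix (Fin (v a)) (Fin (v b)) ℂ) :
    castM2 v ea eb (c • M) = c • castM2 v ea eb M := by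
  subst ea; subst eb; simp [castM2_irrel]

theorem castM2_conjT (v : Fin n → ℕ) {a b a' b' : Fin n} (ea : a = a') (eb : b = b')
    (M : Matrix (Fin (v a)) (Fin (v b)) ℂ) :
    (castM2 v ea eb M)ᴴ = castM2 v eb ea Mᴴ := by
  subst ea; subst eb; simp [castM2_irrel]

theorem castM2_comp (v : Fin n → ℕ) {a b a' b' a'' b'' : Fin n}
    (ea : a = a') (eb : b = b') (ea' : a' = a'') (eb' : b' = b'')
    (M : Matrix (Fin (v a)) (Fin (v b)) ℂ) :
    castM2 v ea' eb' (castM2 v ea eb M) = castM2 v (ea.trans ea') (eb.trans eb') M := by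
  subst ea; subst eb; subst ea'; subst eb'; simp [castM2_irrel]

theorem eps_cases (Ω : E → Prop) [DecidablePred Ω] (h : E) :
    eps Ω h = 1 ∨ eps Ω h = -1 := by
  unfold eps; split <;> simp

theorem star_eps (Ω : E → Prop) [DecidablePred Ω] (h : E) :
    star (eps Ω h) = eps Ω h := by
  rcases eps_cases Ω h with e | e <;> rw [e] <;> simp

theorem eps_bar (Ω : E → Prop) [DecidablePred Ω] (bar : E → E)
    (hor : ∀ h, Ω (bar h) ↔ ¬ Ω h) (h : E) : eps Ω (bar h) = - eps Ω h := by
  by_cases hh : Ω h <;> simp [eps, hor, hh]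

theorem rep_cast' {src tgt : E → Fin n} {v w : Fin n → ℕ} (q : Rep src tgt v w)
    {h1 h2 : E} (e : h1 = h2) (E1 : src h1 = src h2) (E2 : tgt h1 = tgt h2) :
    castM2 v E1 E2 ((q.1 h1)ᴴ) = (q.1 h2)ᴴ := by
  subst e; exact castM2_irrel v E1 E2 _

/-- The matrix identity behind the hyperkähler rotation computation. -/
theorem key_mat {α β : Type*} [Fintype β] (A : Matrix α β ℂ) (C : Matrix β α ℂ) (c ξ : ℂ)
    (hc : c = 1 ∨ c = -1) :
    (A - (c * ξ) • Cᴴ) * (A - (c * ξ) • Cᴴ)ᴴ - (C + (c * ξ) • Aᴴ)ᴴ * (C + (c * ξ) • Aᴴ)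
    = (1 - ξ * star ξ) • (A * Aᴴ - Cᴴ * C) - (2 * c * star ξ) • (A * C)
      - (2 * c * ξ) • (A * C)ᴴ := by
  rcases hc with h | h <;> subst h <;>
  simp only [conjTranspose_sub, conjTranspose_add, conjTranspose_smul, conjTranspose_neg,
    conjTranspose_conjTranspose, conjTranspose_mul, Matrix.sub_mul, Matrix.mul_sub,
    Matrix.add_mul, Matrix.mul_add, Matrix.smul_mul, Matrix.mul_smul, Matrix.neg_mul,
    Matrix.mul_neg, smul_smul,
    star_mul', star_one, star_neg, one_mul, neg_mul, mul_one, mul_neg, neg_neg,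
    neg_smul, smul_neg, sub_neg_eq_add] <;> module

theorem key_mat' {α β : Type*} [Fintype β] (A : Matrix α β ℂ) (C : Matrix β α ℂ) (ξ : ℂ) :
    (A - ξ • Cᴴ) * (A - ξ • Cᴴ)ᴴ - (C + ξ • Aᴴ)ᴴ * (C + ξ • Aᴴ)
    = (1 - ξ * star ξ) • (A * Aᴴ - Cᴴ * C) - (2 * star ξ) • (A * C)
      - (2 * ξ) • (A * C)ᴴ := by
  have := key_mat A C 1 ξ (Or.inl rfl)
  simpa using this

theorem Bbar_HK (src tgt : E → Fin n) (bar : E → E) (Ω : E → Prop) [DecidablePred Ω]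
    (v w : Fin n → ℕ)
    (hinv : ∀ h, bar (bar h) = h)
    (hbs : ∀ h, src (bar h) = tgt h) (hbt : ∀ h, tgt (bar h) = src h)
    (hor : ∀ h, Ω (bar h) ↔ ¬ Ω h)
    (ξ : ℂ) (q : Rep src tgt v w) (h : E) :
    Bbar src tgt bar v w hbs hbt (HK src tgt bar Ω v w hbs hbt ξ q) h
      = Bbar src tgt bar v w hbs hbt q h + (eps Ω h * ξ) • (q.1 h)ᴴ := by
  have h0 : Bbar src tgt bar v w hbs hbt (HK src tgt bar Ω v w hbs hbt ξ q) h
      = castM2 v (hbt h) (hbs h)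
          (q.1 (bar h) - (eps Ω (bar h) * ξ) •
            (castM2 v (hbt (bar h)) (hbs (bar h)) (q.1 (bar (bar h))))ᴴ) := rfl
  rw [h0, castM2_sub, castM2_smul, castM2_conjT, castM2_comp,
    rep_cast' q (hinv h), eps_bar Ω bar hor h]
  have h1 : castM2 v (hbt h) (hbs h) (q.1 (bar h)) = Bbar src tgt bar v w hbs hbt q h := rfl
  rw [h1]
  simp [neg_mul, sub_neg_eq_add]

/-- `μ_ℝ(HK_ξ(q))_k = (1 − |ξ|²)·μ_ℝ(q)_k − i·conj(ξ)·μ_ℂ(q)_k − i·ξ·(μ_ℂ(q)_k)†`. -/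
theorem muR_HK {n : ℕ} {E : Type*} [Fintype E]
    (src tgt : E → Fin n) (bar : E → E) (Ω : E → Prop) [DecidablePred Ω]
    (v w : Fin n → ℕ)
    (hloop : ∀ h, src h ≠ tgt h)
    (hinv : ∀ h, bar (bar h) = h) (hfree : ∀ h, bar h ≠ h)
    (hbs : ∀ h, src (bar h) = tgt h) (hbt : ∀ h, tgt (bar h) = src h)
    (hor : ∀ h, Ω (bar h) ↔ ¬ Ω h)
    (q : Rep src tgt v w) (ξ : ℂ) (k : Fin n) :
    muR src tgt bar v w hbs hbt (HK src tgt bar Ω v w hbs hbt ξ q) k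
      = ((1 : ℂ) - (‖ξ‖ : ℂ) ^ 2) • muR src tgt bar v w hbs hbt q k
        - (Complex.I * (starRingEnd ℂ) ξ) • muC src tgt bar Ω v w hbs hbt q k
        - (Complex.I * ξ) • (muC src tgt bar Ω v w hbs hbt q k)ᴴ := by
  classical
  have hterm : ∀ h : E,
      (if e : tgt h = k then
          castM2 v e e
            ((HK src tgt bar Ω v w hbs hbt ξ q).1 h * ((HK src tgt bar Ω v w hbs hbt ξ q).1 h)ᴴ -
              (Bbar src tgt bar v w hbs hbt (HK src tgt bar Ω v w hbs hbt ξ q) h)ᴴ *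
                Bbar src tgt bar v w hbs hbt (HK src tgt bar Ω v w hbs hbt ξ q) h)
        else 0)
      = ((1 : ℂ) - ξ * star ξ) • (if e : tgt h = k then
            castM2 v e e (q.1 h * (q.1 h)ᴴ -
              (Bbar src tgt bar v w hbs hbt q h)ᴴ * Bbar src tgt bar v w hbs hbt q h) else 0)
        - (2 * star ξ) • (if e : tgt h = k then
            eps Ω h • castM2 v e e (q.1 h * Bbar src tgt bar v w hbs hbt q h) else 0)
        - (2 * ξ) • (if e : tgt h = k then
            eps Ω h • castM2 v e e (q.1 h * Bbar src tgt bar v w hbs hbt q h) else 0)ᴴ := by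
    intro h
    by_cases e : tgt h = k
    · simp only [dif_pos e]
      have hA : (HK src tgt bar Ω v w hbs hbt ξ q).1 h
          = q.1 h - (eps Ω h * ξ) • (Bbar src tgt bar v w hbs hbt q h)ᴴ := rfl
      rw [hA, Bbar_HK src tgt bar Ω v w hinv hbs hbt hor ξ q h,
        key_mat (q.1 h) (Bbar src tgt bar v w hbs hbt q h) (eps Ω h) ξ (eps_cases Ω h),
        castM2_sub, castM2_sub, castM2_smul, castM2_smul, castM2_smul, ← castM2_conjT]
      simp only [conjTranspose_smul, star_eps, smul_smul]
      module
    · simp only [dif_neg e, conjTranspose_zero, smul_zero, sub_zero, zero_sub, neg_zero,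
        add_zero, sub_self]
  have hsum : (∑ h : E, (if e : tgt h = k then
          castM2 v e e
            ((HK src tgt bar Ω v w hbs hbt ξ q).1 h * ((HK src tgt bar Ω v w hbs hbt ξ q).1 h)ᴴ -
              (Bbar src tgt bar v w hbs hbt (HK src tgt bar Ω v w hbs hbt ξ q) h)ᴴ *
                Bbar src tgt bar v w hbs hbt (HK src tgt bar Ω v w hbs hbt ξ q) h)
        else 0))
      = ((1 : ℂ) - ξ * star ξ) • (∑ h : E, if e : tgt h = k then
            castM2 v e e (q.1 h * (q.1 h)ᴴ -
              (Bbar src tgt bar v w hbs hbt q h)ᴴ * Bbar src tgt bar v w hbs hbt q h) else 0)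
        - (2 * star ξ) • (∑ h : E, if e : tgt h = k then
            eps Ω h • castM2 v e e (q.1 h * Bbar src tgt bar v w hbs hbt q h) else 0)
        - (2 * ξ) • (∑ h : E, if e : tgt h = k then
            eps Ω h • castM2 v e e (q.1 h * Bbar src tgt bar v w hbs hbt q h) else 0)ᴴ := by
    rw [Finset.sum_congr rfl (fun h _ => hterm h), Finset.sum_sub_distrib,
      Finset.sum_sub_distrib, ← Finset.smul_sum, ← Finset.smul_sum, ← Finset.smul_sum,
      ← Matrix.conjTranspose_sum]
  have hi : (HK src tgt bar Ω v w hbs hbt ξ q).2.1 k = q.2.1 k - ξ • (q.2.2 k)ᴴ := rfl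
  have hj : (HK src tgt bar Ω v w hbs hbt ξ q).2.2 k = q.2.2 k + ξ • (q.2.1 k)ᴴ := rfl
  have habs : ((1 : ℂ) - (‖ξ‖ : ℂ) ^ 2) = 1 - ξ * star ξ := by
    rw [Complex.star_def, Complex.mul_conj, ← Complex.ofReal_pow, Complex.sq_norm]
  simp only [muR, muC]
  rw [hsum, hi, hj, key_mat' (q.2.1 k) (q.2.2 k) ξ, habs]
  simp only [conjTranspose_add, conjTranspose_smul, conjTranspose_mul, Complex.star_def]
  module

end

end QuiverCL
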